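/- Every permutation of GF(2^n) of Carlitz rank m ≥ 1 has c-differential uniformity at most m + 2 for every c ∈ GF(2^n) with c ≠ 1. -/

import Mathlib

/-- The number of solutions `x` of `F(x+a) + c·F(x) = b`. -/
noncomputable def cdCount (n : ℕ) (F : GaloisField 2 n → GaloisField 2 n)
    (c a b : GaloisField 2 n) : ℕ :=
  Nat.card {x : GaloisField 2 n // F (x + a) + c * F x = b}

/-- The `c`-differential uniformity of `F` (requiring `a ≠ 0` only when `c = 1`). -/
noncomputable def cdu (n : ℕ) (F : GaloisField 2 n → GaloisField 2 n)
    (c : GaloisField 2 n) : ℕ :=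
  sSup {k : ℕ | ∃ a b : GaloisField 2 n, (c = 1 → a ≠ 0) ∧ k = cdCount n F c a b}

/-- The Carlitz expression of length `m`:
`carl n a 0 x = a₀ x + a₁`, and `carl n a (m+1) x = (carl n a m x)⁻¹ + a (m+2)`,
so that `carl n a m` is
`(⋯((a₀x + a₁)^{2ⁿ−2} + a₂)^{2ⁿ−2} ⋯ + a_m)^{2ⁿ−2} + a_{m+1}`
(recall `x⁻¹ = x^{2ⁿ−2}` on `GF(2ⁿ)`, with `0⁻¹ = 0`). -/
noncomputable def carl (n : ℕ) (a : ℕ → GaloisField 2 n) :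
    ℕ → GaloisField 2 n → GaloisField 2 n
  | 0 => fun x => a 0 * x + a 1
  | m + 1 => fun x => (carl n a m x)⁻¹ + a (m + 2)

/-- `F` admits a Carlitz representation of length `m`. -/
def hasCarlitzRep (n m : ℕ) (F : GaloisField 2 n → GaloisField 2 n) : Prop :=
  ∃ a : ℕ → GaloisField 2 n,
    a 0 ≠ 0 ∧ (∀ i, 2 ≤ i → i ≤ m → a i ≠ 0) ∧ F = carl n a m


open Polynomial

lemma quad_card {K : Type*} [Field K] [Fintype K] [DecidableEq K] (A B C : K)
    (h : ¬(A = 0 ∧ B = 0)) :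
    (Finset.univ.filter fun x => A * x ^ 2 + B * x + C = 0).card ≤ 2 := by
  set p : K[X] := Polynomial.C A * X ^ 2 + Polynomial.C B * X + Polynomial.C C with hp
  have hpne : p ≠ 0 := by
    intro h0
    apply h
    constructor
    · have := congrArg (fun q => Polynomial.coeff q 2) h0
      simpa [hp, coeff_X, coeff_C] using this
    · have := congrArg (fun q => Polynomial.coeff q 1) h0
      simpa [hp, coeff_X, coeff_C] using this
  have hsub : (Finset.univ.filter fun x => A * x ^ 2 + B * x + C = 0) ⊆ p.roots.toFinset := by
    intro x hx
    simp only [Finset.mem_filter] at hx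
    rw [Multiset.mem_toFinset, Polynomial.mem_roots hpne]
    simp [Polynomial.IsRoot, hp, hx.2]
  calc (Finset.univ.filter fun x => A * x ^ 2 + B * x + C = 0).card
      ≤ p.roots.toFinset.card := Finset.card_le_card hsub
    _ ≤ Multiset.card p.roots := Multiset.toFinset_card_le _
    _ ≤ p.natDegree := p.card_roots'
    _ ≤ 2 := Polynomial.natDegree_quadratic_le

lemma count_le {K : Type*} [Field K] [Finite K] [CharP K 2]
    (F : K → K) (hFi : Function.Injective F) (α β γ δ : K)
    (hd : α * δ + β * γ ≠ 0) (O : Finset K)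
    (hrep : ∀ x ∉ O, γ * x + δ ≠ 0 ∧ F x = (α * x + β) / (γ * x + δ))
    (c : K) (hc : c ≠ 1) (a b : K) :
    Nat.card {x : K // F (x + a) + c * F x = b} ≤ O.card + 2 := by
  classical
  have : Fintype K := Fintype.ofFinite K
  have htwo : (2 : K) = 0 := CharTwo.two_eq_zero
  have hc1 : (1 : K) + c ≠ 0 := by
    intro h0
    apply hc
    have h1 : c = -1 := eq_neg_of_add_eq_zero_right h0
    rwa [CharTwo.neg_eq] at h1
  set T : Finset K := Finset.univ.filter (fun x => F (x + a) + c * F x = b) with hT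
  have hcard : Nat.card {x : K // F (x + a) + c * F x = b} = T.card := by
    rw [Nat.card_eq_fintype_card, hT, ← Fintype.card_subtype]
  rw [hcard]
  set P : K → Prop := fun x => x ∈ O ∨ x + a ∈ O with hP
  have hTsol : ∀ x ∈ T, F (x + a) + c * F x = b := by
    intro x hx; exact (Finset.mem_filter.mp hx).2
  -- the key pairing argument
  have hkey : ∀ x ∈ T, ∀ y ∈ T, x = y + a → a = 0 := by
    intro x hx y hy hxy
    have hx' := hTsol x hx
    have hy' := hTsol y hy
    have hyx : y + a = x := hxy.symm
    have hxa : y = x + a := by linear_combination -hxy - a * htwo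
    rw [hyx, hxa] at hy'
    have hu : (1 + c) * (F (x + a) + F x) = 0 := by
      linear_combination hx' - hy' + (F x + c * F (x + a)) * htwo
    have hAB : F (x + a) + F x = 0 := by
      rcases mul_eq_zero.mp hu with h0 | h0
      · exact absurd h0 hc1
      · exact h0
    have hFeq : F (x + a) = F x := by
      have h1 := eq_neg_of_add_eq_zero_left hAB
      rwa [CharTwo.neg_eq] at h1
    have h2 : x + a = x := hFi hFeq
    linear_combination h2
  have hsplit : T.card = (T.filter P).card + (T.filter (fun x => ¬ P x)).card :=
    (Finset.card_filter_add_card_filter_not (p := P)).symm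
  have hpart1 : (T.filter P).card ≤ O.card := by
    apply Finset.card_le_card_of_injOn (fun x => if x ∈ O then x else x + a)
    · intro x hx
      rcases Finset.mem_filter.mp hx with ⟨hxT, hxP⟩
      by_cases hxO : x ∈ O
      · simpa [hxO] using hxO
      · have : x + a ∈ O := hxP.resolve_left hxO
        simpa [hxO] using this
    · intro x hx y hy hfxy
      rcases Finset.mem_filter.mp hx with ⟨hxT, hxP⟩
      rcases Finset.mem_filter.mp hy with ⟨hyT, hyP⟩
      by_cases hxO : x ∈ O <;> by_cases hyO : y ∈ O <;>
        simp only [hxO, hyO, if_pos, if_neg, if_true, if_false] at hfxy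
      · exact hfxy
      · -- x ∈ O, y ∉ O, x = y + a
        have ha0 : a = 0 := hkey x hxT y hyT hfxy
        rw [ha0, add_zero] at hfxy
        exact hfxy
      · -- x ∉ O, y ∈ O, x + a = y
        have ha0 : a = 0 := hkey y hyT x hxT hfxy.symm
        rw [ha0, add_zero] at hfxy
        exact hfxy
      · exact add_right_cancel hfxy
  have hAB2 : ¬ ((α * γ + c * (α * γ) - b * (γ * γ)) = 0 ∧
      (α * δ + α * a * γ + β * γ + c * (α * γ * a + α * δ + β * γ)
        - b * (γ * γ * a + 2 * (γ * δ))) = 0) := by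
    rintro ⟨hA, hB⟩
    by_cases hγ : γ = 0
    · have hαδ : α * δ ≠ 0 := by
        intro h0; apply hd; rw [hγ, mul_zero, add_zero]; exact h0
      have h1 : (1 + c) * (α * δ) = 0 := by
        linear_combination hB + (-(α * a) - β - c * (α * a) - c * β + b * γ * a
          + 2 * (b * δ)) * hγ
      rcases mul_eq_zero.mp h1 with h0 | h0
      · exact hc1 h0
      · exact hαδ h0
    · have hb0 : α + c * α - b * γ = 0 := by
        have h1 : γ * (α + c * α - b * γ) = 0 := by linear_combination hA
        exact (mul_eq_zero.mp h1).resolve_left hγ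
      have h2 : (1 + c) * (α * δ + β * γ) = 0 := by
        linear_combination hB - (a * γ) * hb0 + (b * γ * δ) * htwo
      rcases mul_eq_zero.mp h2 with h0 | h0
      · exact hc1 h0
      · exact hd h0
  have hpart2 : (T.filter (fun x => ¬ P x)).card ≤ 2 := by
    refine le_trans (Finset.card_le_card ?_)
      (quad_card _ _ ((α * a + β) * δ + c * (β * (γ * a + δ)) - b * (δ * (γ * a + δ))) hAB2)
    intro x hx
    rcases Finset.mem_filter.mp hx with ⟨hxT, hxP⟩
    have hxO : x ∉ O := fun h => hxP (Or.inl h)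
    have hxaO : x + a ∉ O := fun h => hxP (Or.inr h)
    obtain ⟨hu, hFx⟩ := hrep x hxO
    obtain ⟨hv, hFxa⟩ := hrep (x + a) hxaO
    have heq := hTsol x hxT
    rw [hFx, hFxa] at heq
    rw [mul_div_assoc'] at heq
    rw [div_add_div _ _ hv hu, div_eq_iff (mul_ne_zero hv hu)] at heq
    simp only [Finset.mem_filter, Finset.mem_univ, true_and]
    linear_combination heq
  omega

lemma carl_rat (n : ℕ) (a : ℕ → GaloisField 2 n) (h0 : a 0 ≠ 0) (m : ℕ) :
    ∃ (α β γ δ : GaloisField 2 n) (O : Finset (GaloisField 2 n)),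
      α * δ + β * γ ≠ 0 ∧ O.card ≤ m ∧
      ∀ x ∉ O, γ * x + δ ≠ 0 ∧ carl n a m x = (α * x + β) / (γ * x + δ) := by
  classical
  have : Fintype (GaloisField 2 n) := Fintype.ofFinite _
  have htwo : (2 : GaloisField 2 n) = 0 := CharTwo.two_eq_zero
  induction m with
  | zero =>
    refine ⟨a 0, a 1, 0, 1, ∅, by simpa using h0, by simp, ?_⟩
    intro x _
    refine ⟨by simp, ?_⟩
    simp [carl]
  | succ m ih =>
    obtain ⟨α, β, γ, δ, O, hd, hOc, hrep⟩ := ih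
    set t := a (m + 2) with ht
    refine ⟨t * α + γ, t * β + δ, α, β,
      O ∪ Finset.univ.filter (fun x => α * x + β = 0), ?_, ?_, ?_⟩
    · intro hd0
      apply hd
      linear_combination hd0 - (t * α * β) * htwo
    · refine le_trans (Finset.card_union_le _ _) ?_
      have h1 : (Finset.univ.filter (fun x => α * x + β = 0)).card ≤ 1 := by
        apply Finset.card_le_one.mpr
        intro x hx y hy
        have hx' := (Finset.mem_filter.mp hx).2
        have hy' := (Finset.mem_filter.mp hy).2
        by_cases hα : α = 0
        · exfalso
          have hβ : β = 0 := by rw [hα] at hx'; simpa using hx'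
          apply hd
          rw [hα, hβ]; ring
        · have h2 : α * (x - y) = 0 := by linear_combination hx' - hy'
          have := (mul_eq_zero.mp h2).resolve_left hα
          exact sub_eq_zero.mp this
      omega
    · intro x hx
      simp only [Finset.mem_union, Finset.mem_filter, Finset.mem_univ, true_and,
        not_or] at hx
      obtain ⟨hxO, hxβ⟩ := hx
      obtain ⟨hu, hcx⟩ := hrep x hxO
      refine ⟨hxβ, ?_⟩
      have hstep : carl n a (m + 1) x = (carl n a m x)⁻¹ + t := rfl
      rw [hstep, hcx, inv_div]
      rw [div_add' _ _ _ hxβ]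
      ring


theorem stmt_11 (n : ℕ) (F : GaloisField 2 n → GaloisField 2 n)
    (hF : Function.Bijective F) (m : ℕ) (hm : 1 ≤ m)
    (hrep : hasCarlitzRep n m F)
    (hmin : ∀ k, hasCarlitzRep n k F → m ≤ k)
    (c : GaloisField 2 n) (hc : c ≠ 1) :
    cdu n F c ≤ m + 2 := by
  obtain ⟨aa, ha0, -, hFeq⟩ := hrep
  obtain ⟨α, β, γ, δ, O, hd, hOc, hrepr⟩ := carl_rat n aa ha0 m
  rw [← hFeq] at hrepr
  apply csSup_le'
  rintro k ⟨a, b, -, rfl⟩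
  calc cdCount n F c a b ≤ O.card + 2 :=
        count_le F hF.injective α β γ δ hd O hrepr c hc a b
    _ ≤ m + 2 := by omega
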